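/- arXiv:2302.13112 — 2 statements merged into one kernel-verified Lean document; each statement's English description precedes it below -/
import Mathlib

section
/- In the bipartite set-cover graph with apex q, conversely: if F ⊆ {q} × A is any set of at most κ added edges such that every node of B ∪ {q} is reachable from every size-1 maximizer of σ(·, F), then {D_j : (q, v_j) ∈ F} is a set cover of size at most κ. -/
/-- The set of nodes reachable from a seed set `S` in the directed graph with
edge relation `r` (including the seeds themselves). -/
def reachSet {V : Type*} (r : V → V → Prop) (S : Set V) : Set V :=
  {v | ∃ s ∈ S, Relation.ReflTransGen r s v}

/-- Nodes of the set-cover reduction graph: set nodes `A = {v₁,…,v_μ}`,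
ground-element nodes `B = {u₁,…,u_ν}`, and the extra node `q`. -/
inductive SCNode (μ ν : ℕ) where
  | a : Fin μ → SCNode μ ν
  | b : Fin ν → SCNode μ ν
  | q : SCNode μ ν
  deriving DecidableEq, Fintype

/-- The deterministic base edges of the set-cover graph: `v_j → u_i` iff
`U_i ∈ D_j`, where `D j` is the `j`-th set of the set-cover instance. -/
def scEdge (μ ν : ℕ) (D : Fin μ → Set (Fin ν)) : SCNode μ ν → SCNode μ ν → Prop
  | .a j, .b i => i ∈ D j
  | _, _ => False

/-- Converse direction in the set-cover apex graph: if `F ⊆ {q} × A` has at most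
`κ` edges and every node of `B ∪ {q}` is reachable from every size-1 maximizer
of `σ(·, F)`, then `{D_j : (q, v_j) ∈ F}` is a set cover of size at most `κ`. -/
theorem setcover_apex_converse (μ ν κ : ℕ) (D : Fin μ → Set (Fin ν))
    (F : Set (Fin μ)) (hFcard : F.ncard ≤ κ)
    (hmax : ∀ w : SCNode μ ν,
        (∀ w' : SCNode μ ν,
            (reachSet (fun x y => scEdge μ ν D x y ∨ (x = SCNode.q ∧ ∃ j ∈ F, y = SCNode.a j))
                {w'}).ncard ≤
              (reachSet (fun x y => scEdge μ ν D x y ∨ (x = SCNode.q ∧ ∃ j ∈ F, y = SCNode.a j))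
                {w}).ncard) →
        (∀ i : Fin ν,
            Relation.ReflTransGen
              (fun x y => scEdge μ ν D x y ∨ (x = SCNode.q ∧ ∃ j ∈ F, y = SCNode.a j))
              w (SCNode.b i)) ∧
          Relation.ReflTransGen
            (fun x y => scEdge μ ν D x y ∨ (x = SCNode.q ∧ ∃ j ∈ F, y = SCNode.a j))
            w SCNode.q) :
    F.ncard ≤ κ ∧ ∀ i : Fin ν, ∃ j ∈ F, i ∈ D j := by
  set r : SCNode μ ν → SCNode μ ν → Prop :=
    fun x y => scEdge μ ν D x y ∨ (x = SCNode.q ∧ ∃ j ∈ F, y = SCNode.a j) with hr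
  -- no edge enters q
  have hnoq : ∀ x : SCNode μ ν, ¬ r x SCNode.q := by
    rintro x (h | ⟨_, j, _, h⟩)
    · cases x <;> simp [scEdge] at h
    · exact nomatch h
  have hreachq : ∀ x : SCNode μ ν, Relation.ReflTransGen r x SCNode.q → x = SCNode.q := by
    intro x h
    rcases h.cases_tail with h | ⟨c, _, hc⟩
    · exact h.symm
    · exact absurd hc (hnoq c)
  -- pick a maximizer
  have : Nonempty (SCNode μ ν) := ⟨SCNode.q⟩
  obtain ⟨w, hw⟩ := Finite.exists_max
    (fun w : SCNode μ ν => (reachSet r {w}).ncard)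
  obtain ⟨hb, hq⟩ := hmax w (fun w' => hw w')
  have hwq : w = SCNode.q := hreachq w hq
  subst hwq
  refine ⟨hFcard, fun i => ?_⟩
  have h := hb i
  rcases h.cases_head with h | ⟨c, hqc, hcb⟩
  · exact nomatch h
  rcases hqc with h | ⟨_, j, hj, hc⟩
  · simp [scEdge] at h
  subst hc
  rcases hcb.cases_head with h | ⟨c', hac, hcb'⟩
  · exact nomatch h
  rcases hac with h | ⟨h, _⟩
  · cases c' with
    | a j' => simp [scEdge] at h
    | q => simp [scEdge] at h
    | b i' =>
      have : i' ∈ D j := h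
      rcases hcb'.cases_head with h2 | ⟨c'', hbc, _⟩
      · cases h2; exact ⟨j, hj, this⟩
      · rcases hbc with h3 | ⟨h3, _⟩
        · simp [scEdge] at h3
        · exact nomatch h3
  · exact nomatch h
end

section
/- In the set-cover apex graph, for F corresponding to a set cover of size κ, the spread of {q} equals ν + κ + 1: q reaches itself, the κ nodes v_j with (q,v_j) ∈ F, and all ν ground-element nodes u_i. -/
lemma SCNode.a_inj {μ ν : ℕ} : Function.Injective (SCNode.a (μ := μ) (ν := ν)) := by
  intro x y h; cases h; rfl

lemma SCNode.b_inj {μ ν : ℕ} : Function.Injective (SCNode.b (μ := μ) (ν := ν)) := by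
  intro x y h; cases h; rfl

/-- In the set-cover apex graph, for `F` corresponding to a set cover `𝒮` of
size exactly `κ`, the spread of `{q}` equals `ν + κ + 1`: `q` reaches itself,
the `κ` nodes `v_j` with `(q, v_j) ∈ F`, and all `ν` ground-element nodes. -/
theorem setcover_apex_spread (μ ν κ : ℕ) (D : Fin μ → Set (Fin ν))
    (𝒮 : Finset (Fin μ)) (hcard : 𝒮.card = κ)
    (hcover : ∀ i : Fin ν, ∃ j ∈ 𝒮, i ∈ D j) :
    (reachSet (fun x y => scEdge μ ν D x y ∨ (x = SCNode.q ∧ ∃ j ∈ 𝒮, y = SCNode.a j))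
        {SCNode.q}).ncard = ν + κ + 1 := by
  set r : SCNode μ ν → SCNode μ ν → Prop :=
    fun x y => scEdge μ ν D x y ∨ (x = SCNode.q ∧ ∃ j ∈ 𝒮, y = SCNode.a j) with hr
  set T : Finset (SCNode μ ν) :=
    ({SCNode.q} : Finset (SCNode μ ν)) ∪ 𝒮.image SCNode.a ∪ Finset.univ.image SCNode.b
    with hT
  have hset : reachSet r {SCNode.q} = (T : Set (SCNode μ ν)) := by
    ext x
    constructor
    · rintro ⟨s, hs, hpath⟩
      rcases hs with rfl
      induction hpath with
      | refl =>
        simp [hT]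
      | tail _ hstep ih =>
        rename_i c d _
        rcases hstep with hedge | ⟨rfl, j, hj, rfl⟩
        · cases c with
          | a j => cases d with
            | a _ => exact absurd hedge (by simp [scEdge])
            | b i => simp [hT]
            | q => exact absurd hedge (by simp [scEdge])
          | b i => exact absurd hedge (by cases d <;> simp [scEdge])
          | q => exact absurd hedge (by cases d <;> simp [scEdge])
        · simp [hT, hj]
    · intro hx
      refine ⟨SCNode.q, rfl, ?_⟩
      simp only [hT, Finset.coe_union, Set.mem_union, Finset.coe_singleton,
        Set.mem_singleton_iff, Finset.coe_image, Set.mem_image, Finset.mem_coe,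
        Finset.coe_univ, Set.image_univ, Set.mem_range] at hx
      rcases hx with (rfl | ⟨j, hj, rfl⟩) | ⟨i, rfl⟩
      · exact Relation.ReflTransGen.refl
      · exact Relation.ReflTransGen.single (Or.inr ⟨rfl, j, hj, rfl⟩)
      · obtain ⟨j, hj, hij⟩ := hcover i
        exact Relation.ReflTransGen.head (Or.inr ⟨rfl, j, hj, rfl⟩)
          (Relation.ReflTransGen.single (Or.inl hij))
  rw [hset, Set.ncard_coe_finset]
  have h1 : Disjoint ({SCNode.q} : Finset (SCNode μ ν)) (𝒮.image SCNode.a) := by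
    simp [Finset.disjoint_left]
  have h2 : Disjoint (({SCNode.q} : Finset (SCNode μ ν)) ∪ 𝒮.image SCNode.a)
      (Finset.univ.image SCNode.b) := by
    simp only [Finset.disjoint_left, Finset.mem_union, Finset.mem_singleton,
      Finset.mem_image]
    rintro x ((rfl | ⟨j, hj, rfl⟩)) ⟨i, _, h⟩ <;> simp at h
  rw [hT, Finset.card_union_of_disjoint h2, Finset.card_union_of_disjoint h1,
    Finset.card_image_of_injective _ SCNode.a_inj,
    Finset.card_image_of_injective _ SCNode.b_inj,
    Finset.card_singleton, Finset.card_univ, Fintype.card_fin, hcard]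
  omega
end
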